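/- Let n ≥ 2 be an integer and μ ∈ [1/n, 1), and let F* be the associated equilibrium measure: F* has an atom of mass a at 1 and cumulative distribution function F*(x) = (1-a)(x/s)^{1/(n-1)} for x ∈ [0,s], where a ∈ [0,μ) satisfies a = μ(1-(1-a)^n) and s = nμ(1-a)^{n-1}. Then F* is a symmetric equilibrium of the frictionless game: for every G ∈ M(μ), u_n(G,F*) ≤ 1/n. -/

import Mathlib

open MeasureTheory

/-- The fair-tie winning probability of one draw from `G` against `n-1` i.i.d. draws from
`F`, with exact ties broken uniformly at random. -/
noncomputable def winProb (n : ℕ) (G F : Measure ℝ) : ℝ :=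
  ∫ x, (∑ i ∈ Finset.range n,
      ((n - 1).choose i : ℝ) * ((F {x}).toReal) ^ i * ((F (Set.Ico 0 x)).toReal) ^ (n - 1 - i)
        / ((i : ℝ) + 1)) ∂G

/-- `F ∈ M(μ)`: a Borel probability measure on `[0,1]` with mean `μ`. -/
def MemM (μ : ℝ) (F : Measure ℝ) : Prop :=
  IsProbabilityMeasure F ∧ F (Set.Icc (0:ℝ) 1)ᶜ = 0 ∧ (∫ x, x ∂F) = μ

lemma aux_crude (m : ℕ) (p q : ℝ) (hp : 0 ≤ p) (hq : 0 ≤ q) :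
    ∑ i ∈ Finset.range (m+1), (m.choose i : ℝ) * p ^ i * q ^ (m - i) / ((i:ℝ)+1)
      ≤ (p + q) ^ m := by
  calc ∑ i ∈ Finset.range (m+1), (m.choose i : ℝ) * p ^ i * q ^ (m - i) / ((i:ℝ)+1)
      ≤ ∑ i ∈ Finset.range (m+1), (m.choose i : ℝ) * p ^ i * q ^ (m - i) := by
        refine Finset.sum_le_sum fun i _ => ?_
        refine div_le_self (by positivity) ?_
        have : (0:ℝ) ≤ (i:ℝ) := Nat.cast_nonneg i
        linarith
    _ = (p + q) ^ m := by
        rw [add_pow]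
        exact Finset.sum_congr rfl fun i _ => by ring

lemma aux_exact (m : ℕ) (a : ℝ) (ha : 0 < a) :
    ∑ i ∈ Finset.range (m+1), (m.choose i : ℝ) * a ^ i * (1-a) ^ (m - i) / ((i:ℝ)+1)
      = (1 - (1-a)^(m+1)) / (((m:ℝ)+1) * a) := by
  have hmul : (((m:ℝ)+1) * a) * ∑ i ∈ Finset.range (m+1),
      (m.choose i : ℝ) * a ^ i * (1-a) ^ (m - i) / ((i:ℝ)+1)
      = ∑ i ∈ Finset.range (m+1),
        (((m+1).choose (i+1) : ℝ)) * a ^ (i+1) * (1-a) ^ (m + 1 - (i+1)) := by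
    rw [Finset.mul_sum]
    refine Finset.sum_congr rfl fun i _ => ?_
    have hkey : ((m+1) * m.choose i : ℕ) = ((m+1).choose (i+1) * (i+1) : ℕ) :=
      Nat.add_one_mul_choose_eq m i
    have hkey' : ((m:ℝ)+1) * (m.choose i : ℝ) = ((m+1).choose (i+1) : ℝ) * ((i:ℝ)+1) := by
      exact_mod_cast hkey
    have hi : ((i:ℝ)+1) ≠ 0 := by positivity
    have hexp : m + 1 - (i+1) = m - i := by omega
    rw [hexp]
    have hdiv : ((m:ℝ)+1) * (m.choose i : ℝ) / ((i:ℝ)+1) = ((m+1).choose (i+1) : ℝ) := by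
      rw [div_eq_iff hi]; linarith [hkey']
    linear_combination (a ^ (i+1) * (1-a)^(m-i)) * hdiv
  have hsum : ∑ i ∈ Finset.range (m+1),
      (((m+1).choose (i+1) : ℝ)) * a ^ (i+1) * (1-a) ^ (m + 1 - (i+1))
      = 1 - (1-a)^(m+1) := by
    have hbin : ∑ j ∈ Finset.range (m+2), a ^ j * (1-a) ^ (m+1-j) * ((m+1).choose j : ℝ)
        = 1 := by
      rw [← add_pow]
      norm_num
    rw [Finset.sum_range_succ'] at hbin
    simp only [pow_zero, Nat.choose_zero_right, Nat.cast_one, one_mul, mul_one,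
      Nat.sub_zero] at hbin
    have : ∑ i ∈ Finset.range (m+1), (((m+1).choose (i+1) : ℝ)) * a ^ (i+1) * (1-a) ^ (m + 1 - (i+1))
        = ∑ i ∈ Finset.range (m+1), a ^ (i+1) * (1-a) ^ (m+1-(i+1)) * ((m+1).choose (i+1) : ℝ) :=
      Finset.sum_congr rfl fun i _ => by ring
    rw [this]
    linarith
  rw [hsum] at hmul
  have hne : (((m:ℝ)+1) * a) ≠ 0 := by positivity
  field_simp
  linarith [hmul]

/-- For `n ≥ 2` and `μ ∈ [1/n,1)`, the measure `F*` with an atom of mass `a`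
at `1` (where `a = μ(1-(1-a)^n)`, `a ∈ [0,μ)`) and cdf `(1-a)(x/s)^{1/(n-1)}` on `[0,s]`,
`s = nμ(1-a)^{n-1}`, is a symmetric equilibrium of the frictionless game. -/
theorem stmt_10 (n : ℕ) (hn : 2 ≤ n) (μ a s : ℝ)
    (hμn : 1 / (n : ℝ) ≤ μ) (hμ1 : μ < 1)
    (ha0 : 0 ≤ a) (haμ : a < μ) (haeq : a = μ * (1 - (1 - a) ^ n))
    (hs : s = (n : ℝ) * μ * (1 - a) ^ (n - 1))
    (Fstar : Measure ℝ) [IsProbabilityMeasure Fstar] (hsupp : Fstar (Set.Icc (0:ℝ) 1)ᶜ = 0)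
    (hatom : (Fstar {1}).toReal = a)
    (hcdf : ∀ x : ℝ, 0 ≤ x → x ≤ s →
      (Fstar (Set.Iic x)).toReal = (1 - a) * (x / s) ^ ((1 : ℝ) / ((n : ℝ) - 1)))
    (hcdf2 : ∀ x : ℝ, s ≤ x → x < 1 → (Fstar (Set.Iic x)).toReal = 1 - a) :
    ∀ G : Measure ℝ, MemM μ G → winProb n G Fstar ≤ 1 / (n : ℝ) := by
  intro G hG
  obtain ⟨hGprob, hGsupp, hGmean⟩ := hG
  obtain ⟨m, rfl⟩ : ∃ m, n = m + 1 := ⟨n - 1, by omega⟩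
  have hm1 : 1 ≤ m := by omega
  have hmpos : (0:ℝ) < (m:ℝ) := by exact_mod_cast hm1
  have hm0 : (m:ℝ) ≠ 0 := ne_of_gt hmpos
  simp only [Nat.add_sub_cancel] at hs hcdf ⊢
  have hnpos : (0:ℝ) < ((m:ℕ):ℝ) + 1 := by positivity
  have hncast : (((m+1:ℕ)):ℝ) = (m:ℝ) + 1 := by push_cast; ring
  have hμpos : 0 < μ := lt_of_lt_of_le (by rw [hncast]; positivity) hμn
  have hnμ : 1 ≤ ((m:ℝ)+1) * μ := by
    rw [div_le_iff₀ (by rw [hncast] at *; positivity)] at hμn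
    rw [hncast] at hμn; linarith
  have ha1 : a < 1 := haμ.trans hμ1
  have h1a : 0 < 1 - a := by linarith
  have hspos : 0 < s := by rw [hs, hncast]; positivity
  have hsval : s = ((m:ℝ)+1) * μ * (1-a)^m := by rw [hs, hncast]
  have hexp : (1:ℝ) / ((((m+1:ℕ)):ℝ) - 1) = 1 / (m:ℝ) := by rw [hncast]; ring_nf
  have hcdf' : ∀ x : ℝ, 0 ≤ x → x ≤ s →
      (Fstar (Set.Iic x)).toReal = (1 - a) * (x / s) ^ ((1 : ℝ) / (m:ℝ)) := by
    intro x h0 h1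
    rw [hcdf x h0 h1, hexp]
  have hIcc1 : Fstar (Set.Icc (0:ℝ) 1) = 1 := by
    have h := measure_add_measure_compl (μ := Fstar) (measurableSet_Icc (a := (0:ℝ)) (b := 1))
    rw [hsupp, add_zero] at h
    rw [h]; exact measure_univ
  have hIic1 : (Fstar (Set.Iic (1:ℝ))).toReal = 1 := by
    have hle : Fstar (Set.Icc (0:ℝ) 1) ≤ Fstar (Set.Iic 1) := measure_mono Set.Icc_subset_Iic_self
    have h1 : Fstar (Set.Iic (1:ℝ)) = 1 := le_antisymm prob_le_one (hIcc1 ▸ hle)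
    rw [h1]; rfl
  have hs1 : s ≤ 1 := by
    by_contra h
    push_neg at h
    have h1 := hcdf' 1 zero_le_one h.le
    rw [hIic1] at h1
    have hlt : (1/s : ℝ) < 1 := by rw [div_lt_one hspos]; exact h
    have hr : ((1:ℝ)/s) ^ ((1:ℝ)/(m:ℝ)) < 1 :=
      Real.rpow_lt_one (by positivity) hlt (by positivity)
    have hr0 : (0:ℝ) ≤ ((1:ℝ)/s) ^ ((1:ℝ)/(m:ℝ)) := Real.rpow_nonneg (by positivity) _
    nlinarith
  -- pointwise bound
  have key : ∀ x ∈ Set.Icc (0:ℝ) 1,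
      (∑ i ∈ Finset.range (m+1), ((m.choose i : ℝ)) * ((Fstar {x}).toReal) ^ i *
        ((Fstar (Set.Ico 0 x)).toReal) ^ (m - i) / ((i:ℝ)+1)) ≤ x / (((m:ℝ)+1) * μ) := by
    rintro x ⟨hx0, hx1⟩
    set p := (Fstar {x}).toReal with hp
    set q := (Fstar (Set.Ico 0 x)).toReal with hq
    have hp0 : 0 ≤ p := ENNReal.toReal_nonneg
    have hq0 : 0 ≤ q := ENNReal.toReal_nonneg
    have hunion : Fstar (Set.Ico 0 x) + Fstar {x} = Fstar (Set.Icc 0 x) := by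
      rw [← Set.Ico_union_right hx0,
        measure_union (by simp) (measurableSet_singleton x)]
    have hqp : q + p = (Fstar (Set.Icc 0 x)).toReal := by
      rw [hq, hp, ← ENNReal.toReal_add (measure_ne_top _ _) (measure_ne_top _ _), hunion]
    have hpqQ : p + q ≤ (Fstar (Set.Iic x)).toReal := by
      have h2 : Fstar (Set.Icc 0 x) ≤ Fstar (Set.Iic x) := measure_mono Set.Icc_subset_Iic_self
      have := ENNReal.toReal_le_toReal (measure_ne_top _ _) (measure_ne_top _ _) |>.mpr h2
      linarith [hqp, this]
    have crude : (∑ i ∈ Finset.range (m+1), ((m.choose i : ℝ)) * p ^ i *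
        q ^ (m - i) / ((i:ℝ)+1)) ≤ ((Fstar (Set.Iic x)).toReal) ^ m :=
      le_trans (aux_crude m p q hp0 hq0)
        (pow_le_pow_left₀ (by linarith) hpqQ m)
    rcases le_or_gt x s with hxs | hsx
    · -- x ≤ s
      have hQ := hcdf' x hx0 hxs
      have hQpow : ((Fstar (Set.Iic x)).toReal) ^ m = x / (((m:ℝ)+1) * μ) := by
        rw [hQ, mul_pow]
        have hrp : (((x/s) ^ ((1:ℝ)/(m:ℝ))) : ℝ) ^ m = x / s := by
          rw [← Real.rpow_natCast ((x/s) ^ ((1:ℝ)/(m:ℝ))) m,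
            ← Real.rpow_mul (div_nonneg hx0 hspos.le), one_div_mul_cancel hm0,
            Real.rpow_one]
        rw [hrp, hsval]
        have hne : (1-a)^m ≠ 0 := by positivity
        field_simp
      linarith [crude, hQpow.le]
    · rcases eq_or_lt_of_le hx1 with hx1' | hx1'
      · -- x = 1
        subst hx1'
        have hpa : p = a := hatom
        have hq1a : q = 1 - a := by
          have : Fstar (Set.Icc (0:ℝ) 1) = 1 := hIcc1
          have h3 : q + p = 1 := by rw [hqp, this, ENNReal.toReal_one]
          linarith [hpa ▸ h3]
        rcases eq_or_lt_of_le ha0 with ha' | ha'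
        · -- a = 0
          have hsnμ : s = ((m:ℝ)+1) * μ := by rw [hsval, ← ha']; ring_nf
          have hnμ1 : ((m:ℝ)+1) * μ = 1 := le_antisymm (by rw [← hsnμ]; exact hs1) hnμ
          have : (p + q) ^ m = 1 := by rw [hpa, hq1a, ← ha']; norm_num
          have h4 := aux_crude m p q hp0 hq0
          rw [this] at h4
          rw [hnμ1]
          simpa using h4
        · -- a > 0
          have h5 := aux_exact m a ha'
          rw [hpa, hq1a]
          rw [h5]
          have h6 : 1 - (1-a)^(m+1) = a / μ := by
            field_simp at haeq ⊢
            linarith [haeq]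
          rw [h6]
          have heq : a / μ / (((m:ℝ)+1) * a) = 1 / (((m:ℝ)+1) * μ) := by
            field_simp
          exact le_of_eq heq
      · -- s ≤ x < 1
        have hQ := hcdf2 x hsx.le hx1'
        have h7 : ((Fstar (Set.Iic x)).toReal) ^ m = (1-a)^m := by rw [hQ]
        have h8 : (1-a)^m = s / (((m:ℝ)+1) * μ) := by
          rw [hsval]; field_simp
        calc _ ≤ ((Fstar (Set.Iic x)).toReal) ^ m := crude
          _ = s / (((m:ℝ)+1) * μ) := by rw [h7, h8]
          _ ≤ x / (((m:ℝ)+1) * μ) := by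
            gcongr
  -- integral part
  have hidInt : Integrable (fun x : ℝ => x) G := by
    by_contra h
    rw [integral_undef h] at hGmean
    exact absurd hGmean.symm (ne_of_gt hμpos)
  have hψInt : Integrable (fun x : ℝ => x / (((m:ℝ)+1) * μ)) G := hidInt.div_const _
  have haeIcc : ∀ᵐ x ∂G, x ∈ Set.Icc (0:ℝ) 1 := by
    rw [ae_iff]
    convert hGsupp using 2
    rfl
  have hae : ∀ᵐ x ∂G, (∑ i ∈ Finset.range (m+1), ((m.choose i : ℝ)) * ((Fstar {x}).toReal) ^ i *
      ((Fstar (Set.Ico 0 x)).toReal) ^ (m - i) / ((i:ℝ)+1)) ≤ x / (((m:ℝ)+1) * μ) := by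
    filter_upwards [haeIcc] with x hx using key x hx
  have hwp : winProb (m+1) G Fstar = ∫ x, (∑ i ∈ Finset.range (m+1),
      ((m.choose i : ℝ)) * ((Fstar {x}).toReal) ^ i *
      ((Fstar (Set.Ico 0 x)).toReal) ^ (m - i) / ((i:ℝ)+1)) ∂G := by
    rw [winProb]
    simp only [Nat.add_sub_cancel]
  rw [hwp]
  by_cases hφ : Integrable (fun x : ℝ => ∑ i ∈ Finset.range (m+1),
      ((m.choose i : ℝ)) * ((Fstar {x}).toReal) ^ i *
      ((Fstar (Set.Ico 0 x)).toReal) ^ (m - i) / ((i:ℝ)+1)) G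
  · calc _ ≤ ∫ x, x / (((m:ℝ)+1) * μ) ∂G := integral_mono_ae hφ hψInt hae
      _ = μ / (((m:ℝ)+1) * μ) := by rw [integral_div, hGmean]
      _ = 1 / (((m+1:ℕ):ℝ)) := by
          rw [hncast]; field_simp
  · rw [integral_undef hφ]
    positivity
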